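/- Let n ≥ 2 and κ ∈ ℝⁿ with all κᵢ > 0, H = Σκᵢ. If Σκᵢ² - H²/n < c₀H² with 0 < c₀ < 1/(n(n-1)), then κᵢ > 0 implies in fact κ₁ > (1/n - √((n-1)c₀/n)) H > 0; i.e., the pinching condition with c₀ < 1/(n(n-1)) forces strict convexity quantitatively. -/

import Mathlib

/-- The strict pinching condition with `c₀ < 1/(n(n-1))` quantitatively forces
strict convexity: each principal curvature satisfies
`κᵢ > (1/n - √((n-1)c₀/n))·H > 0`. -/
theorem pinching_strict_convexity (n : ℕ) (hn : 2 ≤ n) (c₀ : ℝ)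
    (hc₀ : 0 < c₀) (hc₀' : c₀ < 1 / (n * (n - 1) : ℝ))
    (κ : Fin n → ℝ) (hκ : ∀ i, 0 < κ i) (H : ℝ) (hH : H = ∑ i, κ i)
    (hpinch : (∑ i, (κ i) ^ 2) - H ^ 2 / n < c₀ * H ^ 2) :
    (∀ i, κ i > (1 / n - Real.sqrt ((n - 1) * c₀ / n)) * H) ∧
    (1 / n - Real.sqrt ((n - 1) * c₀ / n)) * H > 0 := by
  have hn0 : (0:ℝ) < n := by positivity
  have hn1 : (1:ℝ) ≤ (n:ℝ) - 1 := by
    have : (2:ℝ) ≤ n := by exact_mod_cast hn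
    linarith
  have hH0 : 0 < H := by
    rw [hH]
    exact Finset.sum_pos (fun i _ => hκ i) ⟨⟨0, by omega⟩, Finset.mem_univ _⟩
  set d := Real.sqrt ((n - 1) * c₀ / n) with hd
  have hdsq : d ^ 2 = (n - 1) * c₀ / n := Real.sq_sqrt (by positivity)
  have hd0 : 0 ≤ d := Real.sqrt_nonneg _
  have hdlt : d < 1 / n := by
    have h1 : d ^ 2 < (1 / n) ^ 2 := by
      rw [hdsq]
      rw [div_pow]
      rw [div_lt_div_iff₀ hn0 (by positivity)]
      have : c₀ * ((n:ℝ) * (n - 1)) < 1 := by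
        have hpos : (0:ℝ) < (n:ℝ) * ((n:ℝ) - 1) := by nlinarith
        calc c₀ * ((n:ℝ) * (n - 1)) < (1 / ((n:ℝ) * (n - 1))) * ((n:ℝ) * (n - 1)) := by
              exact mul_lt_mul_of_pos_right hc₀' hpos
          _ = 1 := by field_simp
      nlinarith [sq_nonneg ((n:ℝ) - 1)]
    exact lt_of_pow_lt_pow_left₀ 2 (by positivity) h1
  have hpart2 : (1 / n - d) * H > 0 := mul_pos (by linarith) hH0
  refine ⟨?_, hpart2⟩
  intro i
  -- deviations
  set f : Fin n → ℝ := fun j => κ j - H / n with hf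
  have hsumf : ∑ j, f j = 0 := by
    simp only [hf, Finset.sum_sub_distrib, ← hH, Finset.sum_const, Finset.card_univ,
      Fintype.card_fin, nsmul_eq_mul]
    field_simp
    ring
  have hS : ∑ j, f j ^ 2 = (∑ j, (κ j) ^ 2) - H ^ 2 / n := by
    simp only [hf, sub_sq]
    rw [Finset.sum_add_distrib, Finset.sum_sub_distrib]
    have h2 : ∑ x : Fin n, 2 * κ x * (H / n) = 2 * (H / n) * ∑ x, κ x := by
      rw [Finset.mul_sum]; exact Finset.sum_congr rfl fun x _ => by ring
    rw [h2, ← hH]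
    simp [Finset.sum_const, Finset.card_univ]
    field_simp
    ring
  have hSlt : ∑ j, f j ^ 2 < c₀ * H ^ 2 := by rw [hS]; exact hpinch
  -- Cauchy-Schwarz on the complement of i
  have hkey : (n:ℝ) * f i ^ 2 ≤ ((n:ℝ) - 1) * ∑ j, f j ^ 2 := by
    have hsplit : ∑ j, f j = f i + ∑ j ∈ Finset.univ.erase i, f j := by
      rw [add_comm, Finset.sum_erase_add _ _ (Finset.mem_univ i)]
    have hfi : f i = -(∑ j ∈ Finset.univ.erase i, f j) := by
      have := hsumf; rw [hsplit] at this; linarith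
    have hcs : (∑ j ∈ Finset.univ.erase i, f j) ^ 2 ≤
        (Finset.univ.erase i).card * ∑ j ∈ Finset.univ.erase i, f j ^ 2 :=
      sq_sum_le_card_mul_sum_sq
    have hcard : ((Finset.univ.erase i).card : ℝ) = (n:ℝ) - 1 := by
      rw [Finset.card_erase_of_mem (Finset.mem_univ i)]
      simp [Finset.card_univ]
      have : 1 ≤ n := by omega
      push_cast [Nat.cast_sub this]
      ring
    have hsplit2 : ∑ j, f j ^ 2 = f i ^ 2 + ∑ j ∈ Finset.univ.erase i, f j ^ 2 := by
      rw [add_comm, Finset.sum_erase_add _ _ (Finset.mem_univ i)]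
    have h1 : f i ^ 2 ≤ ((n:ℝ) - 1) * ∑ j ∈ Finset.univ.erase i, f j ^ 2 := by
      calc f i ^ 2 = (∑ j ∈ Finset.univ.erase i, f j) ^ 2 := by rw [hfi]; ring
        _ ≤ ((n:ℝ) - 1) * ∑ j ∈ Finset.univ.erase i, f j ^ 2 := by rw [← hcard]; exact_mod_cast hcs
    nlinarith [h1, hsplit2]
  have hfi2 : f i ^ 2 < (d * H) ^ 2 := by
    have hdH2 : (d * H) ^ 2 = ((n:ℝ) - 1) * c₀ / n * H ^ 2 := by rw [mul_pow, hdsq]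
    have h2 : (n:ℝ) * f i ^ 2 < ((n:ℝ) - 1) * (c₀ * H ^ 2) := by
      calc (n:ℝ) * f i ^ 2 ≤ ((n:ℝ) - 1) * ∑ j, f j ^ 2 := hkey
        _ < ((n:ℝ) - 1) * (c₀ * H ^ 2) := by
            exact mul_lt_mul_of_pos_left hSlt (by linarith)
    rw [hdH2]
    rw [div_mul_eq_mul_div, lt_div_iff₀ hn0]
    nlinarith
  have habs : |f i| < d * H := by
    have h3 : |f i| ^ 2 < (d * H) ^ 2 := by rwa [sq_abs]
    exact lt_of_pow_lt_pow_left₀ 2 (by positivity) h3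
  have := (abs_lt.mp habs).1
  have : κ i - H / n > -(d * H) := by simpa [hf] using this
  have hfin : κ i > H / n - d * H := by linarith
  calc (1 / n - d) * H = H / n - d * H := by ring
    _ < κ i := hfin
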